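/- Let α be a circle with center c and radius r, and let P be a point inside α other than c. Let X be an intersection point of α with the line through P perpendicular to the line cP. Then the circle β centered at the inverse point P' = c + (r²/‖P−c‖²)(P−c) with radius ‖P' − X‖ is orthogonal to α. -/

import Mathlib

/-- Construction of the inverse point: for `P` inside circle `(c, r)` with
`P ≠ c`, and `X` on the circle with `PX ⟂ cP`, the circle centered at the
inverse point `P' = c + (r²/‖P−c‖²)(P−c)` with radius `‖P' − X‖` is orthogonal
to `(c, r)`. -/
theorem inverse_point_orthogonal_circle
    (c P X : EuclideanSpace ℝ (Fin 2)) (r : ℝ) (hr : 0 < r)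
    (hPin : dist P c < r) (hPc : P ≠ c)
    (hX : dist X c = r) (hperp : inner ℝ (X - P) (P - c) = (0 : ℝ)) :
    r ^ 2 + ‖(c + (r ^ 2 / ‖P - c‖ ^ 2) • (P - c)) - X‖ ^ 2
      = dist c (c + (r ^ 2 / ‖P - c‖ ^ 2) • (P - c)) ^ 2 := by
  have hd : ‖P - c‖ ≠ 0 := by
    simpa [sub_eq_zero] using hPc
  set t : ℝ := r ^ 2 / ‖P - c‖ ^ 2 with ht
  have hXc : ‖X - c‖ = r := by rw [← hX, dist_eq_norm]
  have hinner : inner ℝ (X - c) (P - c) = (‖P - c‖ ^ 2 : ℝ) := by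
    have : X - c = (X - P) + (P - c) := by abel
    rw [this, inner_add_left, hperp, real_inner_self_eq_norm_sq]
    ring
  have h1 : (c + t • (P - c)) - X = (c - X) + t • (P - c) := by abel
  have h2 : ‖(c + t • (P - c)) - X‖ ^ 2
      = ‖c - X‖ ^ 2 + 2 * (t * inner ℝ (c - X) (P - c)) + t ^ 2 * ‖P - c‖ ^ 2 := by
    rw [h1, @norm_add_sq_real, norm_smul, real_inner_smul_right]
    simp [abs_of_nonneg, mul_pow]
  have h3 : inner ℝ (c - X) (P - c) = -(‖P - c‖ ^ 2 : ℝ) := by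
    rw [show c - X = -(X - c) by abel, inner_neg_left, hinner]
  have h4 : t * ‖P - c‖ ^ 2 = r ^ 2 := by
    rw [ht, div_mul_cancel₀ _ (pow_ne_zero 2 hd)]
  have h5 : ‖c - X‖ = r := by rw [norm_sub_rev, hXc]
  have h6 : dist c (c + t • (P - c)) ^ 2 = t ^ 2 * ‖P - c‖ ^ 2 := by
    rw [dist_eq_norm, show c - (c + t • (P - c)) = -(t • (P - c)) by abel,
      norm_neg, norm_smul]
    simp [mul_pow, abs_of_nonneg, sq_abs]
  rw [h2, h3, h5, h6]
  nlinarith [h4]
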